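/- If there exists a coarse (M,L)-quasi isometry between Banach spaces E and F, then the net distance satisfies d_N(E,F) ≤ M². -/

import Mathlib

/-- `N` is an `(ε, δ)`-net in the metric space `E`: it is `ε`-dense and `δ`-separated. -/
def IsNetIn {E : Type} [MetricSpace E] (N : Set E) (ε δ : ℝ) : Prop :=
  (∀ x : E, ∃ n ∈ N, dist x n ≤ ε) ∧ ∀ a ∈ N, ∀ b ∈ N, a ≠ b → δ ≤ dist a b

/-- The set of products `l(T) * l(T⁻¹)` over bi-Lipschitz bijections `T` between nets of `E`
and `F`. -/
def netDistSet (E F : Type) [MetricSpace E] [MetricSpace F] : Set ℝ :=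
  { c | ∃ (NE : Set E) (NF : Set F) (ε₁ δ₁ ε₂ δ₂ : ℝ), 0 < ε₁ ∧ 0 < δ₁ ∧ 0 < ε₂ ∧ 0 < δ₂ ∧
      IsNetIn NE ε₁ δ₁ ∧ IsNetIn NF ε₂ δ₂ ∧
      ∃ (T : NE → NF) (K K' : ℝ), Function.Bijective T ∧ 0 < K ∧ 0 < K' ∧
        (∀ a b : NE, dist (T a : F) (T b : F) ≤ K * dist (a : E) (b : E)) ∧
        (∀ a b : NE, dist (a : E) (b : E) ≤ K' * dist (T a : F) (T b : F)) ∧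
        c = K * K' }

/-- The net distance between Banach spaces `E` and `F`. -/
noncomputable def netDist (E F : Type) [MetricSpace E] [MetricSpace F] : ℝ :=
  sInf (netDistSet E F)

/-- Every metric space contains a `(δ, δ)`-net, by Zorn's lemma (maximal δ-separated set). -/
lemma exists_net {E : Type} [MetricSpace E] (δ : ℝ) (hδ : 0 < δ) :
    ∃ N : Set E, IsNetIn N δ δ := by
  have hch : ∀ c ⊆ {S : Set E | ∀ a ∈ S, ∀ b ∈ S, a ≠ b → δ ≤ dist a b},
      IsChain (· ⊆ ·) c → ∃ ub ∈ {S : Set E | ∀ a ∈ S, ∀ b ∈ S, a ≠ b → δ ≤ dist a b},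
        ∀ s ∈ c, s ⊆ ub := by
    intro c hc hchain
    refine ⟨⋃₀ c, ?_, fun s hs => Set.subset_sUnion_of_mem hs⟩
    rintro a ⟨s, hs, has⟩ b ⟨t, ht, hbt⟩ hab
    rcases hchain.total hs ht with hst | hts
    · exact hc ht a (hst has) b hbt hab
    · exact hc hs a has b (hts hbt) hab
  obtain ⟨N, hN⟩ := zorn_subset
      {S : Set E | ∀ a ∈ S, ∀ b ∈ S, a ≠ b → δ ≤ dist a b} hch
  refine ⟨N, ?_, hN.prop⟩
  intro x
  by_contra h
  push_neg at h
  have hxN : x ∉ N := fun hx => by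
    have hc := h x hx; rw [dist_self] at hc; linarith
  have hins : insert x N ∈ {S : Set E | ∀ a ∈ S, ∀ b ∈ S, a ≠ b → δ ≤ dist a b} := by
    intro a ha b hb hab
    rcases ha with rfl | ha
    · rcases hb with rfl | hb
      · exact absurd rfl hab
      · exact le_of_lt (h b hb)
    · rcases hb with rfl | hb
      · rw [dist_comm]; exact le_of_lt (h a ha)
      · exact hN.prop a ha b hb hab
  have := hN.le_of_ge hins (Set.subset_insert x N)
  exact hxN (this (Set.mem_insert x N))

/-- If there is a coarse `(M,L)`-quasi isometry between Banach spaces `E` and `F`, then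
`d_N(E, F) ≤ M²`. -/
theorem stmt_5 {E F : Type} [NormedAddCommGroup E] [NormedSpace ℝ E] [CompleteSpace E]
    [NormedAddCommGroup F] [NormedSpace ℝ F] [CompleteSpace F]
    (M L ξ : ℝ) (hM : 0 < M) (hL : 0 ≤ L) (hξ : 0 ≤ ξ)
    (T : E → F)
    (hTlow : ∀ x y : E, (1 / M) * ‖x - y‖ - L ≤ ‖T x - T y‖)
    (hTup : ∀ x y : E, ‖T x - T y‖ ≤ M * ‖x - y‖ + L)
    (hTdense : ∀ z : F, ∃ x : E, ‖z - T x‖ ≤ ξ) :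
    netDist E F ≤ M ^ 2 := by
  have hbdd : BddBelow (netDistSet E F) := by
    refine ⟨0, ?_⟩
    rintro c ⟨NE, NF, ε₁, δ₁, ε₂, δ₂, -, -, -, -, -, -, Tm, K, K', -, hK, hK', -, -, rfl⟩
    positivity
  refine le_of_forall_pos_le_add ?_
  intro η hη
  -- choose a large separation parameter δ
  set δ : ℝ := M * L * (1 + M ^ 2 + η) / η + M * L + 1 with hδdef
  have hδpos : 0 < δ := by positivity
  have hδML : M * L < δ := by
    have h1 : 0 ≤ M * L * (1 + M ^ 2 + η) / η := by positivity
    rw [hδdef]; linarith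
  obtain ⟨NE, hNEdense, hNEsep⟩ := exists_net (E := E) δ hδpos
  -- the image net in F
  set NF : Set F := T '' NE with hNFdef
  -- key quantitative facts
  have sep_low : ∀ a ∈ NE, ∀ b ∈ NE, a ≠ b →
      (1 / M - L / δ) * ‖a - b‖ ≤ ‖T a - T b‖ := by
    intro a ha b hb hab
    have hd : δ ≤ ‖a - b‖ := by
      have := hNEsep a ha b hb hab; rwa [dist_eq_norm] at this
    have h1 := hTlow a b
    have h2 : L / δ * ‖a - b‖ ≥ L := by
      rw [ge_iff_le, div_mul_eq_mul_div, le_div_iff₀ hδpos]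
      nlinarith
    nlinarith
  have hKpos : (0:ℝ) < M + L / δ := by positivity
  have hK'inv : (0:ℝ) < 1 / M - L / δ := by
    rw [sub_pos, div_lt_div_iff₀ hδpos hM]
    nlinarith
  -- injectivity of T on NE
  have hinj : ∀ a ∈ NE, ∀ b ∈ NE, T a = T b → a = b := by
    intro a ha b hb hTab
    by_contra hab
    have h1 := sep_low a ha b hb hab
    rw [hTab, sub_self, norm_zero] at h1
    have hd : δ ≤ ‖a - b‖ := by
      have := hNEsep a ha b hb hab; rwa [dist_eq_norm] at this
    nlinarith [mul_pos hK'inv (lt_of_lt_of_le hδpos hd)]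
  have hnet2 : IsNetIn NF (ξ + M * δ + L) ((1 / M - L / δ) * δ) := by
    constructor
    · intro z
      obtain ⟨x, hx⟩ := hTdense z
      obtain ⟨n, hn, hxn⟩ := hNEdense x
      refine ⟨T n, ⟨n, hn, rfl⟩, ?_⟩
      rw [dist_eq_norm]
      calc ‖z - T n‖ ≤ ‖z - T x‖ + ‖T x - T n‖ := by
            have h : z - T n = (z - T x) + (T x - T n) := by abel
            rw [h]; exact norm_add_le _ _
        _ ≤ ξ + (M * ‖x - n‖ + L) := add_le_add hx (hTup x n)
        _ ≤ ξ + (M * δ + L) := by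
            have h : ‖x - n‖ ≤ δ := by rwa [dist_eq_norm] at hxn
            nlinarith
        _ = ξ + M * δ + L := by ring
    · rintro _ ⟨a, ha, rfl⟩ _ ⟨b, hb, rfl⟩ hab
      have hab' : a ≠ b := fun h => hab (by rw [h])
      have hd : δ ≤ ‖a - b‖ := by
        have := hNEsep a ha b hb hab'; rwa [dist_eq_norm] at this
      rw [dist_eq_norm]
      calc (1 / M - L / δ) * δ ≤ (1 / M - L / δ) * ‖a - b‖ :=
            mul_le_mul_of_nonneg_left hd hK'inv.le
        _ ≤ ‖T a - T b‖ := sep_low a ha b hb hab'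
  -- the bijection
  set Tm : NE → NF := fun a => ⟨T a, ⟨a, a.2, rfl⟩⟩ with hTmdef
  have hTmbij : Function.Bijective Tm := by
    constructor
    · intro a b hab
      have h : T (a : E) = T (b : E) := congrArg Subtype.val hab
      exact Subtype.ext (hinj a a.2 b b.2 h)
    · rintro ⟨_, a, ha, rfl⟩
      exact ⟨⟨a, ha⟩, rfl⟩
  set K : ℝ := M + L / δ with hKdef
  set K' : ℝ := (1 / M - L / δ)⁻¹ with hK'def
  have hK'pos : 0 < K' := inv_pos.mpr hK'inv
  have hmem : K * K' ∈ netDistSet E F := by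
    refine ⟨NE, NF, δ, δ, ξ + M * δ + L, (1 / M - L / δ) * δ, hδpos, hδpos,
      by positivity, mul_pos hK'inv hδpos, ⟨hNEdense, hNEsep⟩, hnet2,
      Tm, K, K', hTmbij, hKpos, hK'pos, ?_, ?_, rfl⟩
    · intro a b
      rcases eq_or_ne a b with rfl | hab
      · simp
      · have hab' : (a : E) ≠ (b : E) := fun h => hab (Subtype.ext h)
        have hd : δ ≤ ‖(a : E) - b‖ := by
          have := hNEsep a a.2 b b.2 hab'; rwa [dist_eq_norm] at this
        have h1 := hTup (a : E) (b : E)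
        have h2 : L ≤ L / δ * ‖(a : E) - b‖ := by
          rw [div_mul_eq_mul_div, le_div_iff₀ hδpos]; nlinarith
        simp only [dist_eq_norm]
        show ‖T a - T b‖ ≤ K * ‖(a : E) - (b : E)‖
        have h3 : K * ‖(a : E) - (b : E)‖ = M * ‖(a : E) - b‖ + L / δ * ‖(a : E) - b‖ := by
          rw [hKdef]; ring
        rw [h3]; linarith
    · intro a b
      rcases eq_or_ne a b with rfl | hab
      · simp
      · have hab' : (a : E) ≠ (b : E) := fun h => hab (Subtype.ext h)
        simp only [dist_eq_norm]
        show ‖(a : E) - (b : E)‖ ≤ K' * ‖T a - T b‖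
        rw [hK'def, inv_mul_eq_div, le_div_iff₀ hK'inv, mul_comm]
        exact sep_low a a.2 b b.2 hab'
  have hle := csInf_le hbdd hmem
  refine hle.trans ?_
  -- show K * K' ≤ M ^ 2 + η
  have hδne : δ ≠ 0 := hδpos.ne'
  have hMne : M ≠ 0 := hM.ne'
  have key : M * L * (1 + M ^ 2 + η) ≤ η * δ := by
    have h : M * L * (1 + M ^ 2 + η) / η ≤ δ := by
      rw [hδdef]; nlinarith [mul_nonneg hM.le hL]
    have h2 := (div_le_iff₀ hη).mp h
    linarith
  have e1 : (M + L / δ) * (M * δ) = M ^ 2 * δ + M * L := by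
    field_simp
  have a1 : (1 / M - L / δ) * (M * δ) = δ - L * M := by
    field_simp
  have e2 : (M ^ 2 + η) * (1 / M - L / δ) * (M * δ) = (M ^ 2 + η) * (δ - L * M) := by
    rw [mul_assoc, a1]
  have hstep : (M + L / δ) * (M * δ) ≤ (M ^ 2 + η) * (1 / M - L / δ) * (M * δ) := by
    rw [e1, e2]; nlinarith [key]
  have hfin : M + L / δ ≤ (M ^ 2 + η) * (1 / M - L / δ) :=
    le_of_mul_le_mul_right hstep (by positivity)
  rw [hKdef, hK'def, ← div_eq_mul_inv, div_le_iff₀ hK'inv]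
  exact hfin
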